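/- arXiv:2605.28570 — 9 statements merged into one kernel-verified Lean document; each statement's English description precedes it below -/
import Mathlib

section
/- A binary word x is overlap-free if and only if μ(x) is overlap-free, where μ is the Thue-Morse morphism defined by μ(0)=01, μ(1)=10. -/
/-- Thue–Morse morphism: μ(0)=01, μ(1)=10, encoding 0 = false, 1 = true. -/
def mu (w : List Bool) : List Bool := w.flatMap fun b => [b, !b]

/-- A word is an overlap if it has the form a·x·a·x·a for a letter a. -/
def IsOverlap (w : List Bool) : Prop :=
  ∃ (a : Bool) (x : List Bool), w = [a] ++ x ++ [a] ++ x ++ [a]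

/-- A word contains an overlap as a factor. -/
def HasOverlap (w : List Bool) : Prop := ∃ f, f <:+: w ∧ IsOverlap f

/-- A word is overlap-free if no factor is an overlap. -/
def OverlapFree (w : List Bool) : Prop := ∀ f, f <:+: w → ¬ IsOverlap f

lemma mu_cons (b : Bool) (t : List Bool) : mu (b :: t) = b :: (!b) :: mu t := rfl
lemma mu_append (u v : List Bool) : mu (u ++ v) = mu u ++ mu v := List.flatMap_append
lemma mu_length (w : List Bool) : (mu w).length = 2 * w.length := by
  induction w with
  | nil => rfl
  | cons b t ih => rw [mu_cons]; simp [ih]; omega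

lemma mu_getD (w : List Bool) (i : ℕ) (h : i < 2 * w.length) :
    (mu w).getD i false =
      if i % 2 = 0 then w.getD (i/2) false else !(w.getD (i/2) false) := by
  induction w generalizing i with
  | nil => simp at h
  | cons b t ih =>
    rw [mu_cons]
    match i with
    | 0 => simp
    | 1 => simp
    | (n+2) =>
      have hb : n < 2 * t.length := by simp at h; omega
      have := ih n hb
      have h2 : (n+2)/2 = n/2 + 1 := by omega
      have h3 : (n+2) % 2 = n % 2 := by omega
      simpa [h2, h3] using this

lemma mu_nil : mu [] = [] := rfl
lemma eq_of_getD (u v : List Bool) (hl : u.length = v.length)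
    (h : ∀ i < u.length, u.getD i false = v.getD i false) : u = v :=
  List.ext_getElem hl (fun i h1 h2 => by
    rw [← List.getD_eq_getElem u false h1, ← List.getD_eq_getElem v false h2]
    exact h i h1)

lemma getD_drop_take (w : List Bool) (k p i : ℕ) (h1 : k + p ≤ w.length) (h2 : i < p) :
    ((w.drop k).take p).getD i false = w.getD (k+i) false := by
  have hlen : ((w.drop k).take p).length = p := by simp; omega
  have hi : i < ((w.drop k).take p).length := by omega
  have hki : k + i < w.length := by omega
  rw [List.getD_eq_getElem _ false hi, List.getD_eq_getElem _ false hki]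
  simp [List.getElem_take, List.getElem_drop]

lemma hasOverlap_iff (w : List Bool) :
    HasOverlap w ↔ ∃ k p, 0 < p ∧ k + 2*p + 1 ≤ w.length ∧
      ∀ i ≤ p, w.getD (k+i) false = w.getD (k+p+i) false := by
  constructor
  · rintro ⟨f, ⟨s, t, rfl⟩, a, x, rfl⟩
    set c : List Bool := a :: x with hc
    set p := x.length + 1 with hp
    have hcl : c.length = p := by simp [hc, hp]
    have hf : [a] ++ x ++ [a] ++ x ++ [a] = c ++ (c ++ [a]) := by simp [hc]
    refine ⟨s.length, p, by omega, by simp [hf, hcl]; omega, ?_⟩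
    intro i hi
    have key : ∀ j < 2*p+1, (s ++ ([a] ++ x ++ [a] ++ x ++ [a]) ++ t).getD (s.length + j) false
        = (c ++ (c ++ [a])).getD j false := by
      intro j hj
      rw [List.append_assoc, List.getD_append_right s _ false _ (by omega)]
      have : s.length + j - s.length = j := by omega
      rw [this, hf, List.getD_append _ t false j (by simp [hcl]; omega)]
    rw [key i (by omega), show s.length + p + i = s.length + (p+i) from by omega,
      key (p+i) (by omega)]
    rw [List.getD_append_right c (c ++ [a]) false (p+i) (by omega)]
    have : p + i - c.length = i := by omega
    rw [this]
    rcases Nat.lt_or_ge i p with h | h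
    · rw [List.getD_append _ _ false i (by omega), List.getD_append _ _ false i (by omega)]
    · have hip : i = p := by omega
      subst hip
      rw [List.getD_append_right c (c ++ [a]) false p (by omega),
        List.getD_append_right c [a] false p (by omega), hcl, Nat.sub_self]
      simp [hc]
  · rintro ⟨k, p, hp, hlen, hper⟩
    set c : List Bool := (w.drop k).take p with hc
    have hcl : c.length = p := by simp [hc]; omega
    have hcc : c = (w.drop (k+p)).take p := by
      apply eq_of_getD _ _ (by simp [hcl]; omega)
      intro i hi
      rw [hcl] at hi
      rw [hc, getD_drop_take w k p i (by omega) hi,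
        getD_drop_take w (k+p) p i (by omega) hi]
      exact hper i (by omega)
    have ha : w.getD (k + 2*p) false = w.getD k false := by
      have h1 := hper 0 (Nat.zero_le p)
      have h2 := hper p (le_refl p)
      simp only [Nat.add_zero] at h1
      rw [show k + 2*p = k + p + p from by omega, ← h2, ← h1]
    obtain ⟨b, y, hby⟩ := List.exists_cons_of_ne_nil (show c ≠ [] by
      intro h; rw [h] at hcl; simp at hcl; omega)
    have hb : b = w.getD k false := by
      have := getD_drop_take w k p 0 (by omega) (by omega)
      rw [← hc, hby] at this; simpa using this
    have hseg : (w.drop k).take (2*p+1) = c ++ c ++ [w.getD k false] := by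
      have e1 : (w.drop k).take (2*p+1) = (w.drop k).take p ++ ((w.drop k).drop p).take (p+1) := by
        rw [← List.take_add]; ring_nf
      have e2 : (w.drop k).drop p = w.drop (k+p) := by rw [List.drop_drop]
      have e3 : (w.drop (k+p)).take (p+1) = (w.drop (k+p)).take p ++ ((w.drop (k+p)).drop p).take 1 := by
        rw [← List.take_add]
      have e4 : (w.drop (k+p)).drop p = w.drop (k+2*p) := by rw [List.drop_drop]; ring_nf
      have e5 : (w.drop (k+2*p)).take 1 = [w.getD k false] := by
        have hlt : k + 2*p < w.length := by omega
        rw [List.drop_eq_getElem_cons hlt, List.take_succ_cons, List.take_zero,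
          ← ha, List.getD_eq_getElem w false hlt]
      rw [e1, e2, e3, e4, e5, ← hc, ← hcc]
      try rw [List.append_assoc]
    refine ⟨c ++ c ++ [w.getD k false], ⟨w.take k, (w.drop k).drop (2*p+1), ?_⟩,
      w.getD k false, y, ?_⟩
    · rw [← hseg, List.append_assoc, List.take_append_drop, List.take_append_drop]
    · rw [hby, ← hb]; simp
lemma hasOverlap_mu_of (x : List Bool) (h : HasOverlap x) : HasOverlap (mu x) := by
  obtain ⟨f, ⟨s, t, rfl⟩, a, y, rfl⟩ := h
  refine ⟨[a] ++ ((!a) :: mu y) ++ [a] ++ ((!a) :: mu y) ++ [a],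
    ⟨mu s, (!a) :: mu t, ?_⟩, a, (!a) :: mu y, rfl⟩
  simp [mu_append, mu_cons, mu_nil]

lemma hasOverlap_of_mu (x : List Bool) (h : HasOverlap (mu x)) : HasOverlap x := by
  rw [hasOverlap_iff] at h ⊢
  obtain ⟨k, p, hp, hlen, hper⟩ := h
  rw [mu_length] at hlen
  have E : ∀ i, i ≤ p →
      (if (k+i) % 2 = 0 then x.getD ((k+i)/2) false else !(x.getD ((k+i)/2) false))
      = (if (k+p+i) % 2 = 0 then x.getD ((k+p+i)/2) false else !(x.getD ((k+p+i)/2) false)) := by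
    intro i hi
    rw [← mu_getD x (k+i) (by omega), ← mu_getD x (k+p+i) (by omega)]
    exact hper i (by omega)
  rcases Nat.even_or_odd p with ⟨q, hq⟩ | ⟨q, hq⟩
  · refine ⟨k/2, q, by omega, by omega, ?_⟩
    intro j hj
    have e := E (2*j) (by omega)
    by_cases hk : k % 2 = 0
    · simpa only [show (k+2*j) % 2 = 0 from by omega, show (k+p+2*j) % 2 = 0 from by omega,
        show (k+2*j)/2 = k/2+j from by omega, show (k+p+2*j)/2 = k/2+q+j from by omega,
        reduceIte] using e
    · simp only [show (k+2*j) % 2 = 1 from by omega, show (k+p+2*j) % 2 = 1 from by omega,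
        show (k+2*j)/2 = k/2+j from by omega, show (k+p+2*j)/2 = k/2+q+j from by omega,
        reduceIte] at e
      simpa using e
  · by_cases hk : k % 2 = 0
    · have A : ∀ j, j ≤ q → x.getD (k/2+j) false = !(x.getD (k/2+q+j) false) := by
        intro j hj
        have e := E (2*j) (by omega)
        rw [if_pos (show (k+2*j) % 2 = 0 from by omega),
          if_neg (show ¬ (k+p+2*j) % 2 = 0 from by omega),
          show (k+2*j)/2 = k/2+j from by omega,
          show (k+p+2*j)/2 = k/2+q+j from by omega] at e
        exact e
      have B : ∀ j, j ≤ q → x.getD (k/2+q+j+1) false = !(x.getD (k/2+j) false) := by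
        intro j hj
        have e := E (2*j+1) (by omega)
        rw [if_neg (show ¬ (k+(2*j+1)) % 2 = 0 from by omega),
          if_pos (show (k+p+(2*j+1)) % 2 = 0 from by omega),
          show (k+(2*j+1))/2 = k/2+j from by omega,
          show (k+p+(2*j+1))/2 = k/2+q+j+1 from by omega] at e
        exact e.symm
      rcases Nat.eq_zero_or_pos q with hq0 | hq0
      · exfalso
        have h0 := A 0 (Nat.zero_le q)
        rw [hq0] at h0
        simp at h0
      · have C : ∀ j, j ≤ q → x.getD (k/2+q+j) false = x.getD (k/2+q+j+1) false := by
          intro j hj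
          have a1 := A j hj
          have b1 := B j hj
          rw [b1, a1]
          simp
        refine ⟨k/2+q, 1, one_pos, by omega, ?_⟩
        intro i hi
        interval_cases i
        · simpa using C 0 (by omega)
        · exact C 1 hq0
    · have A : ∀ j, j ≤ q → x.getD (k/2+q+j+1) false = !(x.getD (k/2+j) false) := by
        intro j hj
        have e := E (2*j) (by omega)
        rw [if_neg (show ¬ (k+2*j) % 2 = 0 from by omega),
          if_pos (show (k+p+2*j) % 2 = 0 from by omega),
          show (k+2*j)/2 = k/2+j from by omega,
          show (k+p+2*j)/2 = k/2+q+j+1 from by omega] at e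
        exact e.symm
      have B : ∀ j, j ≤ q → x.getD (k/2+j+1) false = !(x.getD (k/2+q+j+1) false) := by
        intro j hj
        have e := E (2*j+1) (by omega)
        rw [if_pos (show (k+(2*j+1)) % 2 = 0 from by omega),
          if_neg (show ¬ (k+p+(2*j+1)) % 2 = 0 from by omega),
          show (k+(2*j+1))/2 = k/2+j+1 from by omega,
          show (k+p+(2*j+1))/2 = k/2+q+j+1 from by omega] at e
        exact e
      rcases Nat.eq_zero_or_pos q with hq0 | hq0
      · exfalso
        have h0 := B 0 (Nat.zero_le q)
        rw [hq0] at h0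
        simp at h0
      · have C : ∀ j, j ≤ q → x.getD (k/2+j) false = x.getD (k/2+j+1) false := by
          intro j hj
          have a1 := A j hj
          have b1 := B j hj
          rw [b1, a1]
          simp
        refine ⟨k/2, 1, one_pos, by omega, ?_⟩
        intro i hi
        interval_cases i
        · simpa using C 0 (by omega)
        · exact C 1 hq0

theorem stmt_0 (x : List Bool) : OverlapFree x ↔ OverlapFree (mu x) := by
  have h1 : ∀ w : List Bool, OverlapFree w ↔ ¬ HasOverlap w := by
    intro w
    constructor
    · rintro hw ⟨f, hinf, hov⟩
      exact hw f hinf hov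
    · intro hw f hinf hov
      exact hw ⟨f, hinf, hov⟩
  rw [h1 x, h1 (mu x), not_iff_not]
  exact ⟨hasOverlap_mu_of x, hasOverlap_of_mu x⟩
end

section
/- Let x be a binary word and a a letter. If the word a·x contains an overlap as a factor, then so does ā·μ(x), where ā denotes the complement of a and μ is the Thue-Morse morphism. -/
lemma mu_infix {u v : List Bool} (h : u <:+: v) : mu u <:+: mu v := by
  obtain ⟨s, t, rfl⟩ := h
  exact ⟨mu s, mu t, by simp [mu_append]⟩

lemma mu_overlap {f : List Bool} (h : IsOverlap f) : HasOverlap (mu f) := by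
  obtain ⟨a, y, rfl⟩ := h
  refine ⟨[a] ++ ([!a] ++ mu y) ++ [a] ++ ([!a] ++ mu y) ++ [a], ?_, a, [!a] ++ mu y, rfl⟩
  refine ⟨[], [!a], ?_⟩
  simp [mu_append, mu]

theorem stmt_1 (x : List Bool) (a : Bool) (h : HasOverlap (a :: x)) :
    HasOverlap ((!a) :: mu x) := by
  obtain ⟨f, ⟨s, t, hst⟩, hov⟩ := h
  cases s with
  | cons c s' =>
      -- f is an infix of x
      have hfx : f <:+: x := ⟨s', t, by simpa using congrArg List.tail hst⟩
      obtain ⟨g, hg, hgov⟩ := mu_overlap hov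
      exact ⟨g, hg.trans ((mu_infix hfx).trans ⟨[!a], [], by simp⟩), hgov⟩
  | nil =>
      -- f is a prefix of a :: x
      obtain ⟨b, y, rfl⟩ := hov
      simp only [List.nil_append, List.append_assoc] at hst
      have hb : b = a := by
        have := congrArg (List.head? ·) hst
        simpa using this
      subst hb
      have hx : x = y ++ [b] ++ y ++ [b] ++ t := by
        have := congrArg List.tail hst
        simpa using this.symm
      refine ⟨[!b] ++ (mu y ++ [b]) ++ [!b] ++ (mu y ++ [b]) ++ [!b], ?_,
        !b, mu y ++ [b], rfl⟩
      refine ⟨[], mu t, ?_⟩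
      simp [hx, mu_append, mu]
end

section
/- Let x be a binary word and a a letter. If the word x·a contains an overlap as a factor, then so does μ(x)·a, where μ is the Thue-Morse morphism. -/
theorem stmt_2 (x : List Bool) (a : Bool) (h : HasOverlap (x ++ [a])) :
    HasOverlap (mu x ++ [a]) := by
  obtain ⟨f, ⟨u, v, huv⟩, b, y, rfl⟩ := h
  set Y := mu y with hY
  set g : List Bool := [b] ++ ((!b) :: Y) ++ [b] ++ ((!b) :: Y) ++ [b] with hg
  have hgo : IsOverlap g := ⟨b, (!b) :: Y, rfl⟩
  rcases v.eq_nil_or_concat with rfl | ⟨w, c, rfl⟩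
  · have h1 : (u ++ ([b] ++ y ++ [b] ++ y)) ++ [b] = x ++ [a] := by
      simpa using huv
    obtain ⟨hx, ha⟩ := List.append_inj' h1 rfl
    have ha' : b = a := by injection ha
    subst ha'
    refine ⟨g, ?_, hgo⟩
    have : mu x ++ [b] = (mu u) ++ g := by
      rw [← hx, mu_append]
      simp [mu, g, Y]
    rw [this]
    exact ⟨mu u, [], by simp⟩
  · have h1 : (u ++ ([b] ++ y ++ [b] ++ y ++ [b]) ++ w) ++ [c] = x ++ [a] := by
      simpa using huv
    obtain ⟨hx, _⟩ := List.append_inj' h1 rfl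
    refine ⟨g, ?_, hgo⟩
    have : mu x = mu u ++ g ++ ([!b] ++ mu w) := by
      rw [← hx]
      simp [mu_append, mu, g, Y]
    exact ⟨mu u, [!b] ++ mu w ++ [a], by simp [this]⟩
end

section
/- If x is a binary word and y a binary word such that x·x = μ(y), then there exists a word t with x = μ(t) and y = t·t, where μ is the Thue-Morse morphism. -/
lemma mu_cons_s3 (a : Bool) (w : List Bool) : mu (a :: w) = a :: (!a) :: mu w := rfl

lemma mu_count (w : List Bool) : (mu w).count true = w.length := by
  induction w with
  | nil => rfl
  | cons a w ih => cases a <;> simp [mu_cons_s3, ih, List.count_cons]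

lemma mu_inj : Function.Injective mu := by
  intro l1
  induction l1 with
  | nil =>
    intro l2 h
    cases l2 with
    | nil => rfl
    | cons b l2 => simp [mu, mu_cons_s3] at h
  | cons a l1 ih =>
    intro l2 h
    cases l2 with
    | nil => simp [mu, mu_cons_s3] at h
    | cons b l2 =>
      simp only [mu_cons_s3, List.cons.injEq] at h
      obtain ⟨h1, _, h3⟩ := h
      rw [h1, ih h3]

theorem stmt_3 (x y : List Bool) (h : x ++ x = mu y) :
    ∃ t : List Bool, x = mu t ∧ y = t ++ t := by
  have hlen : x.length = y.length := by
    have := congrArg List.length h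
    simp [mu_length] at this
    omega
  have hcnt : x.count true + x.count true = y.length := by
    have := congrArg (fun l => List.count true l) h
    simpa [List.count_append, mu_count] using this
  set c := x.count true with hc
  have hcle : c ≤ y.length := by omega
  set t := y.take c with htdef
  set s := y.drop c with hsdef
  have hy : y = t ++ s := (List.take_append_drop c y).symm
  have ht : t.length = c := by simp [htdef, hcle]
  have h' : x ++ x = mu t ++ mu s := by rw [h, hy, mu_append]
  have hl : x.length = (mu t).length := by rw [mu_length, ht]; omega
  obtain ⟨h1, h2⟩ := List.append_inj h' hl
  have hts : t = s := mu_inj (h1.symm.trans h2)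
  exact ⟨t, h1, by rw [hy, hts]⟩
end

section
/- Let w be an overlap-free binary word with |w| ≥ 16, whose Restivo–Salemi factorization is w = u·μ(y)·v with y overlap-free and u,v ∈ {ε, 0, 1, 00, 11}. If u = aa for some letter a, then neither 0·w nor 1·w is overlap-free. -/
lemma mu_len (y : List Bool) : (mu y).length = 2 * y.length := by
  induction y with
  | nil => rfl
  | cons b t ih => simp [mu] at ih ⊢; omega

theorem stmt_8 (w u v y : List Bool) (a : Bool)
    (hof : OverlapFree w) (hlen : 16 ≤ w.length)
    (hfac : w = u ++ mu y ++ v) (hy : OverlapFree y)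
    (hu : u ∈ [([] : List Bool), [false], [true], [false, false], [true, true]])
    (hv : v ∈ [([] : List Bool), [false], [true], [false, false], [true, true]])
    (ha : u = [a, a]) :
    ∀ c : Bool, ¬ OverlapFree (c :: w) := by
  subst ha
  -- y has at least 2 letters
  have hyl : 2 ≤ y.length := by
    have h1 := congrArg List.length hfac
    simp [mu_len] at h1
    simp at hv
    rcases hv with rfl | rfl | rfl | rfl | rfl <;> simp at h1 <;> omega
  obtain ⟨b0, b1, t, rfl⟩ : ∃ b0 b1 t, y = b0 :: b1 :: t := by
    match y, hyl with
    | b0 :: b1 :: t, _ => exact ⟨b0, b1, t, rfl⟩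
  have hmu : mu (b0 :: b1 :: t) = b0 :: (!b0) :: b1 :: (!b1) :: mu t := rfl
  rw [hmu] at hfac
  subst hfac
  -- first letter of mu y is !a
  have hb0 : b0 = !a := by
    by_contra h
    have hb : b0 = a := by cases b0 <;> cases a <;> simp_all
    rw [hb] at hof
    exact hof [a, a, a] ⟨[], _, rfl⟩ ⟨a, [], rfl⟩
  rw [hb0] at hof
  simp only [Bool.not_not] at hof
  -- second letter of y is a
  have hb1 : b1 = a := by
    by_contra h
    have hb : b1 = !a := by cases b1 <;> cases a <;> simp_all
    rw [hb] at hof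
    refine hof [a, !a, a, !a, a] ⟨[a], mu t ++ v, ?_⟩ ⟨a, [!a], rfl⟩
    simp
  rw [hb1] at hof
  rw [hb0, hb1]
  simp only [Bool.not_not]
  intro c hc
  by_cases hca : c = a
  · rw [hca] at hc
    exact hc [a, a, a] ⟨[], _, rfl⟩ ⟨a, [], rfl⟩
  · have hcb : c = !a := by cases c <;> cases a <;> simp_all
    rw [hcb] at hc
    refine hc [!a, a, a, !a, a, a, !a] ⟨[], mu t ++ v, ?_⟩ ⟨!a, [a, a], rfl⟩
    simp
end

section
/- Let a be a letter and y an overlap-free binary word with |y| ≥ 6. If a·a·μ(y) is overlap-free, then y begins with the word ā·a·ā. -/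
lemma no3 (x : Bool) (r : List Bool) : ¬ OverlapFree (x :: x :: x :: r) :=
  fun h => h [x, x, x] ⟨[], r, rfl⟩ ⟨x, [], rfl⟩

lemma no5 (x : Bool) (r : List Bool) :
    ¬ OverlapFree (x :: x :: (!x) :: x :: (!x) :: x :: r) :=
  fun h => h [x, !x, x, !x, x] ⟨[x], r, rfl⟩ ⟨x, [!x], rfl⟩

lemma no7 (x : Bool) (r : List Bool) :
    ¬ OverlapFree (x :: x :: (!x) :: x :: x :: (!x) :: x :: r) :=
  fun h => h [x, x, !x, x, x, !x, x] ⟨[], r, rfl⟩ ⟨x, [x, !x], rfl⟩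

theorem stmt_10 (a : Bool) (y : List Bool) (hy : OverlapFree y)
    (hlen : 6 ≤ y.length) (h : OverlapFree ([a, a] ++ mu y)) :
    [!a, a, !a] <+: y := by
  rcases y with _ | ⟨b, _ | ⟨c, _ | ⟨d, t⟩⟩⟩ <;> simp only [List.length] at hlen <;>
    try omega
  have hmu : ([a, a] ++ mu (b :: c :: d :: t)) =
      a :: a :: b :: (!b) :: c :: (!c) :: d :: (!d) :: mu t := by
    simp [mu, List.flatMap]
  rw [hmu] at h
  cases a <;> cases b <;> cases c <;> cases d <;>
    simp only [Bool.not_false, Bool.not_true] at h <;>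
    first
      | exact ⟨t, rfl⟩
      | exact absurd h (no3 _ _)
      | exact absurd h (no5 _ _)
      | exact absurd h (no7 _ _)
end

section
/- Let A = 00, B = 11, C = 010010, D = 101101. Every concatenation of nine or more words chosen from {A, B, C, D} contains an overlap as a factor. -/
/-- Boolean overlap check. -/
def chk (w : List Bool) : Bool :=
  (List.range w.length).any fun p =>
    decide (1 ≤ p) && (List.range w.length).any fun s =>
      decide (s + 2*p + 1 ≤ w.length) &&
        (((w.drop s).take (p+1)) == (((w.drop s).drop p).take (p+1)))

lemma overlap_yya (y : List Bool) (hy : y ≠ []) : IsOverlap (y ++ y ++ y.take 1) := by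
  cases y with
  | nil => exact absurd rfl hy
  | cons a x => exact ⟨a, x, by simp⟩

lemma hasOverlap_mono {v w : List Bool} (h : v <:+: w) : HasOverlap v → HasOverlap w := by
  rintro ⟨f, hf, ho⟩
  exact ⟨f, hf.trans h, ho⟩

lemma chk_sound {w : List Bool} (h : chk w = true) : HasOverlap w := by
  unfold chk at h
  rw [List.any_eq_true] at h
  obtain ⟨p, -, h⟩ := h
  rw [Bool.and_eq_true, decide_eq_true_eq, List.any_eq_true] at h
  obtain ⟨hp, s, -, h⟩ := h
  rw [Bool.and_eq_true, decide_eq_true_eq, beq_iff_eq] at h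
  obtain ⟨hn, heq⟩ := h
  set u := w.drop s with hu
  have hul : u.length = w.length - s := List.length_drop
  have h1 : u.take 1 = (u.drop p).take 1 := by
    have := congrArg (List.take 1) heq
    simpa [List.take_take, Nat.min_eq_left (by omega : 1 ≤ p + 1)] using this
  have hf : u.take (2*p+1) = u.take p ++ u.take p ++ (u.take p).take 1 := by
    have e1 : 2*p+1 = p + (p+1) := by omega
    rw [e1, List.take_add, ← heq, List.take_add, ← h1,
      List.take_take, Nat.min_eq_left hp]
    simp [List.append_assoc]
  refine ⟨u.take (2*p+1), ?_, ?_⟩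
  · exact ((u.take_prefix (2*p+1)).isInfix).trans (w.drop_suffix s).isInfix
  · rw [hf]
    apply overlap_yya
    have : (u.take p).length = p := by
      rw [List.length_take]; omega
    intro hnil
    rw [hnil] at this
    simp at this
    omega

def blocks : List (List Bool) := [[false, false], [true, true],
    [false, true, false, false, true, false],
    [true, false, true, true, false, true]]

def ok : List Bool → Nat → Bool
  | w, 0 => chk w
  | w, n+1 => chk w || blocks.all (fun b => ok (w ++ b) n)

lemma ok_sound : ∀ (n : Nat) (w : List Bool) (l : List (List Bool)),
    ok w n = true → l.length = n → (∀ s ∈ l, s ∈ blocks) →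
    HasOverlap (w ++ l.flatten) := by
  intro n
  induction n with
  | zero =>
    intro w l h hl _
    rw [List.length_eq_zero_iff] at hl
    subst hl
    simpa using chk_sound h
  | succ n ih =>
    intro w l h hl hm
    rw [ok, Bool.or_eq_true] at h
    rcases h with h | h
    · exact hasOverlap_mono ⟨[], l.flatten, by simp⟩ (chk_sound h)
    · cases l with
      | nil => simp at hl
      | cons b l' =>
        rw [List.all_eq_true] at h
        have hb := h b (hm b (by simp))
        have := ih (w ++ b) l' hb (by simpa using hl)
          (fun s hs => hm s (List.mem_cons_of_mem _ hs))
        simpa [List.append_assoc] using this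

theorem stmt_11 (l : List (List Bool)) (hlen : 9 ≤ l.length)
    (hmem : ∀ s ∈ l, s ∈ [[false, false], [true, true],
        [false, true, false, false, true, false],
        [true, false, true, true, false, true]]) :
    HasOverlap l.flatten := by
  have h9 : (l.take 9).length = 9 := by
    rw [List.length_take]; omega
  have hm : ∀ s ∈ l.take 9, s ∈ blocks := fun s hs => hmem s (l.take_subset 9 hs)
  have hok : ok [] 9 = true := by decide
  have := ok_sound 9 [] (l.take 9) hok h9 hm
  rw [List.nil_append] at this
  refine hasOverlap_mono ?_ this
  refine ⟨[], (l.drop 9).flatten, ?_⟩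
  simp [← List.flatten_append]
end

section
/- Let A = 00, B = 11, C = 010010, D = 101101. There are exactly 8 overlap-free words that are concatenations of exactly 8 words from {A,B,C,D}, namely those given by the letter sequences ABADABAD, ABCBABCB, ADABADAB, BABCBABC, BADABADA, BCBABCBA, CBABCBAB, DABADABA. -/
def A : List Bool := [false, false]
def B : List Bool := [true, true]
def C : List Bool := [false, true, false, false, true, false]
def D : List Bool := [true, false, true, true, false, true]

def overlapFreeB (w : List Bool) : Bool :=
  w.tails.all fun t => (List.range (t.length / 2)).all fun n =>
    !(([t.headI] ++ t.tail.take n ++ [t.headI] ++ t.tail.take n ++ [t.headI]).isPrefixOf t)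

lemma overlapFree_iff (w : List Bool) : OverlapFree w ↔ overlapFreeB w = true := by
  constructor
  · intro h
    simp only [overlapFreeB, List.all_eq_true, List.mem_tails, List.mem_range,
      Bool.not_eq_true', ← Bool.not_eq_true, List.isPrefixOf_iff_prefix]
    intro t ht n hn hpre
    exact h _ (hpre.isInfix.trans ht.isInfix) ⟨t.headI, t.tail.take n, rfl⟩
  · intro h f hinf hov
    simp only [overlapFreeB, List.all_eq_true, List.mem_tails, List.mem_range,
      Bool.not_eq_true', ← Bool.not_eq_true, List.isPrefixOf_iff_prefix] at h
    obtain ⟨t, hpre, hsuf⟩ := List.infix_iff_prefix_suffix.mp hinf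
    obtain ⟨a, x, rfl⟩ := hov
    obtain ⟨r, rfl⟩ := hpre
    have hhead : ([a] ++ x ++ [a] ++ x ++ [a] ++ r).headI = a := by simp
    have htail : ([a] ++ x ++ [a] ++ x ++ [a] ++ r).tail.take x.length = x := by
      simp [List.take_append]
    refine h _ hsuf x.length ?_ ?_
    · simp; omega
    · rw [hhead, htail]; simp
lemma overlapFree_of_infix {u v : List Bool} (h : u <:+: v) (hv : OverlapFree v) :
    OverlapFree u := fun f hf => hv f (hf.trans h)

def goodSeqs : Nat → List (List (List Bool))
  | 0 => [[]]
  | n + 1 =>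
    ((goodSeqs n).flatMap fun s => [A, B, C, D].map fun x => s ++ [x]).filter
      fun s => overlapFreeB s.flatten

lemma mem_goodSeqs : ∀ (n : Nat) (l : List (List Bool)), l.length = n →
    (∀ s ∈ l, s ∈ [A, B, C, D]) → OverlapFree l.flatten → l ∈ goodSeqs n := by
  intro n
  induction n with
  | zero => intro l hl _ _; simp [goodSeqs, List.length_eq_zero_iff.mp hl]
  | succ n ih =>
    intro l hl hmem hof
    obtain ⟨l', x, rfl⟩ : ∃ l' x, l = l' ++ [x] := by
      rcases List.eq_nil_or_concat l with rfl | ⟨l', x, rfl⟩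
      · simp at hl
      · exact ⟨l', x, by simp⟩
    simp only [goodSeqs, List.mem_filter, List.mem_flatMap, List.mem_map]
    constructor
    · refine ⟨l', ?_, x, hmem x (by simp), rfl⟩
      refine ih l' (by simpa using hl) (fun s hs => hmem s (by simp [hs])) ?_
      refine overlapFree_of_infix ?_ hof
      exact ⟨[], [x].flatten, by simp⟩
    · exact (overlapFree_iff _).mp hof

theorem stmt_12 :
    ([[A,B,A,D,A,B,A,D].flatten, [A,B,C,B,A,B,C,B].flatten, [A,D,A,B,A,D,A,B].flatten,
      [B,A,B,C,B,A,B,C].flatten, [B,A,D,A,B,A,D,A].flatten, [B,C,B,A,B,C,B,A].flatten,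
      [C,B,A,B,C,B,A,B].flatten, [D,A,B,A,D,A,B,A].flatten] : List (List Bool)).Nodup ∧
    ∀ w : List Bool,
      (OverlapFree w ∧
        ∃ l : List (List Bool), l.length = 8 ∧ (∀ s ∈ l, s ∈ [A, B, C, D]) ∧
          l.flatten = w) ↔
      w ∈ [[A,B,A,D,A,B,A,D].flatten, [A,B,C,B,A,B,C,B].flatten, [A,D,A,B,A,D,A,B].flatten,
            [B,A,B,C,B,A,B,C].flatten, [B,A,D,A,B,A,D,A].flatten, [B,C,B,A,B,C,B,A].flatten,
            [C,B,A,B,C,B,A,B].flatten, [D,A,B,A,D,A,B,A].flatten] := by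
  have key : (goodSeqs 8).all (fun s => s.flatten ∈
      [[A,B,A,D,A,B,A,D].flatten, [A,B,C,B,A,B,C,B].flatten, [A,D,A,B,A,D,A,B].flatten,
       [B,A,B,C,B,A,B,C].flatten, [B,A,D,A,B,A,D,A].flatten, [B,C,B,A,B,C,B,A].flatten,
       [C,B,A,B,C,B,A,B].flatten, [D,A,B,A,D,A,B,A].flatten]) = true := by decide
  rw [List.all_eq_true] at key
  constructor
  · decide
  · intro w
    constructor
    · rintro ⟨hof, l, hlen, hmem, rfl⟩
      exact of_decide_eq_true (key l (mem_goodSeqs 8 l hlen hmem hof))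
    · intro hw
      fin_cases hw
      · exact ⟨(overlapFree_iff _).mpr (by decide), [A,B,A,D,A,B,A,D], rfl, by decide, rfl⟩
      · exact ⟨(overlapFree_iff _).mpr (by decide), [A,B,C,B,A,B,C,B], rfl, by decide, rfl⟩
      · exact ⟨(overlapFree_iff _).mpr (by decide), [A,D,A,B,A,D,A,B], rfl, by decide, rfl⟩
      · exact ⟨(overlapFree_iff _).mpr (by decide), [B,A,B,C,B,A,B,C], rfl, by decide, rfl⟩
      · exact ⟨(overlapFree_iff _).mpr (by decide), [B,A,D,A,B,A,D,A], rfl, by decide, rfl⟩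
      · exact ⟨(overlapFree_iff _).mpr (by decide), [B,C,B,A,B,C,B,A], rfl, by decide, rfl⟩
      · exact ⟨(overlapFree_iff _).mpr (by decide), [C,B,A,B,C,B,A,B], rfl, by decide, rfl⟩
      · exact ⟨(overlapFree_iff _).mpr (by decide), [D,A,B,A,D,A,B,A], rfl, by decide, rfl⟩
end

section
/- Let w be a squarefree word over the alphabet {0,1,2} and let h be the morphism defined by h(a) = a·a for each letter a. Then h(w) is overlap-free. -/
/-- A ternary word is an overlap if it has the form a·y·a·y·a for a letter a. -/
def IsOverlap3 (w : List (Fin 3)) : Prop :=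
  ∃ (a : Fin 3) (y : List (Fin 3)), w = [a] ++ y ++ [a] ++ y ++ [a]

/-- A ternary word is overlap-free if no factor is an overlap. -/
def OverlapFree3 (w : List (Fin 3)) : Prop := ∀ f, f <:+: w → ¬ IsOverlap3 f

/-- A ternary word is squarefree if it has no factor x·x with x nonempty. -/
def Squarefree3 (w : List (Fin 3)) : Prop :=
  ∀ x : List (Fin 3), x ≠ [] → ¬ (x ++ x) <:+: w

/-- The doubling morphism h(a) = a·a. -/
def dbl (w : List (Fin 3)) : List (Fin 3) := w.flatMap fun a => [a, a]

lemma dbl_getElem? (w : List (Fin 3)) (j : ℕ) : (dbl w)[j]? = w[j / 2]? := by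
  induction w generalizing j with
  | nil => simp [dbl]
  | cons a w ih =>
    have hd : dbl (a :: w) = a :: a :: dbl w := rfl
    rw [hd]
    match j with
    | 0 => simp
    | 1 => simp
    | (j + 2) =>
      have h2 : (j + 2) / 2 = j / 2 + 1 := by omega
      simp only [List.getElem?_cons_succ, h2]
      exact ih j

lemma dbl_length (w : List (Fin 3)) : (dbl w).length = 2 * w.length := by
  induction w with
  | nil => rfl
  | cons a w ih =>
    have hd : dbl (a :: w) = a :: a :: dbl w := rfl
    rw [hd]; simp [ih]; omega

/-- If w has m+... repeated getElem? pattern, it has a square. -/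
lemma square_of_period (w : List (Fin 3)) (hsf : Squarefree3 w) (q0 m : ℕ)
    (hm : 0 < m) (hle : q0 + 2 * m ≤ w.length)
    (h : ∀ j < m, w[q0 + j]? = w[q0 + j + m]?) : False := by
  have hxlen : ((w.drop q0).take m).length = m := by
    simp; omega
  have hne : (w.drop q0).take m ≠ [] := by
    intro h0
    rw [h0] at hxlen; simp at hxlen; omega
  have hget : ∀ i : ℕ, ((w.drop q0).take m)[i]? = if i < m then w[q0 + i]? else none := by
    intro i
    rw [List.getElem?_take, List.getElem?_drop]
  have hxx : (w.drop q0).take m ++ (w.drop q0).take m = (w.drop q0).take (2 * m) := by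
    apply List.ext_getElem?
    intro i
    have hR : ((w.drop q0).take (2 * m))[i]? = if i < 2 * m then w[q0 + i]? else none := by
      rw [List.getElem?_take, List.getElem?_drop]
    rw [hR, List.getElem?_append, hxlen]
    by_cases hi : i < m
    · rw [if_pos hi, hget i, if_pos hi, if_pos (by omega)]
    · rw [if_neg hi, hget (i - m)]
      by_cases hi2 : i < 2 * m
      · rw [if_pos (by omega), if_pos hi2]
        have := h (i - m) (by omega)
        have e2 : q0 + (i - m) + m = q0 + i := by omega
        rw [e2] at this
        exact this
      · rw [if_neg (by omega), if_neg hi2]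
  have hinf : ((w.drop q0).take m ++ (w.drop q0).take m) <:+: w := by
    rw [hxx]
    exact ((w.drop q0).take_prefix (2 * m)).isInfix.trans (w.drop_suffix q0).isInfix
  exact hsf _ hne hinf

theorem stmt_17 (w : List (Fin 3)) (hsf : Squarefree3 w) :
    OverlapFree3 (dbl w) := by
  rintro f ⟨s, t, hst⟩ ⟨a, y, hf⟩
  obtain ⟨d, hd⟩ : ∃ d, d = y.length + 1 := ⟨_, rfl⟩
  obtain ⟨p, hp⟩ : ∃ p, p = s.length := ⟨_, rfl⟩
  obtain ⟨n, hn⟩ : ∃ n, n = w.length := ⟨_, rfl⟩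
  have hflen : f.length = 2 * d + 1 := by simp [hf]; omega
  have hlen : p + (2 * d + 1) + t.length = 2 * n := by
    have := congrArg List.length hst
    simp [dbl_length] at this
    omega
  -- Step A : relate f entries with w entries
  have stepA : ∀ i ≤ 2 * d, f[i]? = w[(p + i) / 2]? := by
    intro i hi
    rw [← dbl_getElem? w (p + i), ← hst]
    rw [List.getElem?_append, if_pos (by simp [hflen]; omega),
      List.getElem?_append_right (by omega)]
    congr 1
    omega
  -- Step B : periodicity of f
  have stepB : ∀ i ≤ d, f[i]? = f[i + d]? := by
    intro i hi
    have hxlen : (a :: y).length = d := by simp; omega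
    have hf2 : f = (a :: y) ++ ((a :: y) ++ [a]) := by
      rw [hf]; simp
    rcases Nat.lt_or_ge i d with hlt | hge
    · rw [hf2, List.getElem?_append, if_pos (by rw [hxlen]; omega),
        List.getElem?_append_right (by rw [hxlen]; omega), hxlen,
        List.getElem?_append, if_pos (by omega)]
      congr 1
      omega
    · have hi' : i = d := by omega
      rw [hi']
      have g1 : f[d]? = some a := by
        rw [hf2, List.getElem?_append_right hxlen.le, hxlen, Nat.sub_self]
        simp
      have g2 : f[d + d]? = some a := by
        rw [hf2, List.getElem?_append_right (hxlen.le.trans (Nat.le_add_right d d)), hxlen,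
          Nat.add_sub_cancel, List.getElem?_append_right hxlen.le, hxlen, Nat.sub_self]
        simp
      rw [g1, g2]
  -- key periodicity in w
  have key : ∀ i ≤ d, w[(p + i) / 2]? = w[(p + i + d) / 2]? := by
    intro i hi
    have h1 := stepA i (by omega)
    have h2 := stepA (i + d) (by omega)
    have e : p + (i + d) = p + i + d := by omega
    rw [e] at h2
    rw [← h1, ← h2]
    exact stepB i hi
  rcases Nat.even_or_odd d with ⟨m, hmeq⟩ | hodd
  · -- d even, d = 2m
    have hm : 0 < m := by omega
    apply square_of_period w hsf (p / 2) m hm (by omega)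
    intro i hi
    have := key (2 * i) (by omega)
    have e1 : (p + 2 * i) / 2 = p / 2 + i := by omega
    have e2 : (p + 2 * i + d) / 2 = p / 2 + i + m := by omega
    rw [e1, e2] at this
    exact this
  · -- d odd
    obtain ⟨c, hc⟩ := hodd
    rcases Nat.lt_or_ge d 3 with hd1 | hd3
    · -- d = 1
      have hd1' : d = 1 := by omega
      have k0 := key 0 (by omega)
      have k1 := key 1 (by omega)
      rw [hd1'] at k0 k1
      have e0 : (p + 0) / 2 = p / 2 := by omega
      have e1 : (p + 0 + 1) / 2 = (p + 1) / 2 := by omega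
      have e2 : (p + 1 + 1) / 2 = p / 2 + 1 := by omega
      rw [e0, e1] at k0
      rw [e2] at k1
      apply square_of_period w hsf (p / 2) 1 (by omega) (by omega)
      intro i hi
      have hi0 : i = 0 := by omega
      subst hi0
      have eg : (p : ℕ) / 2 + 0 = p / 2 := by omega
      have eg2 : (p : ℕ) / 2 + 0 + 1 = p / 2 + 1 := by omega
      rw [eg, eg2]
      exact k0.trans k1
    · -- d ≥ 3
      obtain ⟨j, hj⟩ : ∃ j, j = p + 1 + p % 2 := ⟨_, rfl⟩
      have e2 := key (p % 2) (by omega)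
      have e3 := key (1 + p % 2) (by omega)
      have c1 : (p + p % 2) / 2 = (j - 1) / 2 := by omega
      have c2 : (j - 1) / 2 = j / 2 := by omega
      have c3 : (p + (1 + p % 2)) / 2 = j / 2 := by omega
      have c4 : (p + p % 2 + d) / 2 = (j - 1 + d) / 2 := by omega
      have c5 : (p + (1 + p % 2) + d) / 2 = (j + d) / 2 := by omega
      rw [c1, c2, c4] at e2
      rw [c3, c5] at e3
      have main : w[(j + d - 1) / 2]? = w[(j + d - 1) / 2 + 1]? := by
        have c6 : (j + d - 1) / 2 = (j - 1 + d) / 2 := by omega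
        have c7 : (j + d + 1) / 2 = (j + d - 1) / 2 + 1 := by omega
        have c8 : (j + d) / 2 = (j + d - 1) / 2 + 1 := by omega
        rw [c6, ← e2, e3, c8, show j - 1 + d = j + d - 1 from by omega]
      apply square_of_period w hsf ((j + d - 1) / 2) 1 (by omega) (by omega)
      intro i hi
      have hi0 : i = 0 := by omega
      subst hi0
      have eg : (j + d - 1) / 2 + 0 = (j + d - 1) / 2 := by omega
      have eg2 : (j + d - 1) / 2 + 0 + 1 = (j + d - 1) / 2 + 1 := by omega
      rw [eg, eg2]
      exact main
end
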